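/- Consider an ALG-schedule and a reference time t ≥ 0. For a job j, let t_j = sup{u ≤ t : j is processed at u} be the latest time before or at t at which j is processed. For a job i with r i ≤ t, define H_i = {j ∈ Cl(t) ∖ {i} : t_j ≤ r i and i ∈ R_j}. Then: (a) if i ∈ N(t), then (1−α)·y_i(t) ≤ p_j(t) for every j ∈ H_i; and (b) if i ∉ N(t), then (1−α)·(p i) ≤ p_j(t) for every j ∈ H_i. -/

import Mathlib

open MeasureTheory Set

open scoped Classical

noncomputable section

variable {J : Type*}

/-- Total work done on job `j` by time `u` under the schedule `σ`. -/
def workDone (σ : ℝ → J → ℝ) (j : J) (u : ℝ) : ℝ := ∫ v in (0:ℝ)..u, σ v j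

/-- Remaining processing time of job `j` at time `u`. -/
def remT (p : J → ℝ) (σ : ℝ → J → ℝ) (j : J) (u : ℝ) : ℝ := p j - workDone σ j u

/-- Completion time of job `j`: the least `u` with `workDone σ j u = p j`,
    and `⊤` if the job never completes. -/
def cTime (p : J → ℝ) (σ : ℝ → J → ℝ) (j : J) : EReal :=
  sInf ((fun v : ℝ => (v : EReal)) '' {v : ℝ | workDone σ j v = p j})

/-- Job `j` is available at time `u`: released and not yet completed. -/
def availAt (r p : J → ℝ) (σ : ℝ → J → ℝ) (u : ℝ) (j : J) : Prop :=
  r j ≤ u ∧ (u : EReal) < cTime p σ j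

/-- Job `j` is processed at time `u`. -/
def procAt (σ : ℝ → J → ℝ) (u : ℝ) (j : J) : Prop := 0 < σ u j

/-- Job `j` is non-clairvoyant at time `u`. -/
def ncAt (r p : J → ℝ) (α : ℝ) (σ : ℝ → J → ℝ) (u : ℝ) (j : J) : Prop :=
  availAt r p σ u j ∧ workDone σ j u ≤ α * p j

/-- Job `j` is clairvoyant at time `u`. -/
def clAt (r p : J → ℝ) (α : ℝ) (σ : ℝ → J → ℝ) (u : ℝ) (j : J) : Prop :=
  availAt r p σ u j ∧ α * p j < workDone σ j u

/-- The time at which job `j` emits its signal: the least `u` with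
    `workDone σ j u = α * p j`. -/
def emitT (p : J → ℝ) (α : ℝ) (σ : ℝ → J → ℝ) (j : J) : ℝ :=
  sInf {u : ℝ | workDone σ j u = α * p j}

/-- Data of an instance: nonnegative release dates, positive processing times
    and `α ∈ (0,1)`. -/
structure IsInstance (r p : J → ℝ) (α : ℝ) : Prop where
  r_nonneg : ∀ j, 0 ≤ r j
  p_pos : ∀ j, 0 < p j
  alpha_mem : α ∈ Set.Ioo (0 : ℝ) 1

/-- `σ` is a (feasible, preemptive, single machine) schedule. -/
structure IsSchedule [Fintype J] (r p : J → ℝ) (σ : ℝ → J → ℝ) : Prop where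
  meas : ∀ j, Measurable fun u => σ u j
  nonneg : ∀ u j, 0 ≤ σ u j
  sum_le_one : ∀ u, ∑ j, σ u j ≤ 1
  zero_before_release : ∀ u j, u < r j → σ u j = 0
  workDone_le : ∀ u j, workDone σ j u ≤ p j

/-- A schedule is non-idling if it uses the full machine capacity whenever
    some job is available. -/
def NonIdling [Fintype J] (r p : J → ℝ) (σ : ℝ → J → ℝ) : Prop :=
  ∀ u, (∃ j, availAt r p σ u j) → ∑ j, σ u j = 1

/-- The SRPT condition at time `u`: `Cl(u) ≠ ∅` and
    `min_{j ∈ Cl(u)} p_j(u) ≤ ((1-α)/α) · min_{j ∈ N(u)} y_j(u)`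
    (the minimum over the empty set being `+∞`). -/
def SrptCond (r p : J → ℝ) (α : ℝ) (σ : ℝ → J → ℝ) (u : ℝ) : Prop :=
  ∃ k, clAt r p α σ u k ∧
    ∀ j, ncAt r p α σ u j → remT p σ k u ≤ ((1 - α) / α) * workDone σ j u

/-- `k` is a clairvoyant job of minimal remaining processing time at `u`,
    emitting last among those. -/
def IsSrptChoice (r p : J → ℝ) (α : ℝ) (σ : ℝ → J → ℝ) (u : ℝ) (k : J) : Prop :=
  clAt r p α σ u k ∧
    (∀ j, clAt r p α σ u j → remT p σ k u ≤ remT p σ j u) ∧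
    (∀ j, clAt r p α σ u j → remT p σ j u = remT p σ k u →
      emitT p α σ j ≤ emitT p α σ k)

/-- `j` is a non-clairvoyant job with minimal progress at time `u`. -/
def IsMinNc (r p : J → ℝ) (α : ℝ) (σ : ℝ → J → ℝ) (u : ℝ) (j : J) : Prop :=
  ncAt r p α σ u j ∧ ∀ j', ncAt r p α σ u j' → workDone σ j u ≤ workDone σ j' u

/-- `σ` is an ALG-schedule: non-idling, and at any time with available jobs it
    either runs a single clairvoyant job of shortest remaining processing time
    (breaking ties by latest emission) when the SRPT condition holds, or it runs
    exactly the non-clairvoyant jobs of minimal progress at equal rates. -/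
structure IsALG [Fintype J] (r p : J → ℝ) (α : ℝ) (σ : ℝ → J → ℝ) : Prop where
  sched : IsSchedule r p σ
  nonidling : NonIdling r p σ
  srpt_branch : ∀ u, (∃ j, availAt r p σ u j) → SrptCond r p α σ u →
    ∃ k, IsSrptChoice r p α σ u k ∧ ∀ j, j ≠ k → σ u j = 0
  setf_branch : ∀ u, (∃ j, availAt r p σ u j) → ¬ SrptCond r p α σ u →
    (∀ j, procAt σ u j → IsMinNc r p α σ u j) ∧
    (∀ j j', IsMinNc r p α σ u j → IsMinNc r p α σ u j' → σ u j = σ u j')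

/-- Right endpoint `min (C_j, t)` of the lifetime of `j` w.r.t. reference time `t`. -/
def lifeEnd (p : J → ℝ) (σ : ℝ → J → ℝ) (t : ℝ) (j : J) : ℝ :=
  (min (cTime p σ j) (t : EReal)).toReal

/-- The lifetime `I_j = [r j, min (C_j, t)]` of job `j`. -/
def lifetime (r p : J → ℝ) (σ : ℝ → J → ℝ) (t : ℝ) (j : J) : Set ℝ :=
  Set.Icc (r j) (lifeEnd p σ t j)

/-- `E_N`-edge of the borrow graph: `i` is processed at some time of `I_j`
    while being non-clairvoyant. -/
def ENedge (r p : J → ℝ) (α : ℝ) (σ : ℝ → J → ℝ) (t : ℝ) (j i : J) : Prop :=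
  ∃ u ∈ lifetime r p σ t j, procAt σ u i ∧ ncAt r p α σ u i

/-- `E_C`-edge of the borrow graph: `i` is processed at some time of `I_j`
    while being clairvoyant. -/
def ECedge (r p : J → ℝ) (α : ℝ) (σ : ℝ → J → ℝ) (t : ℝ) (j i : J) : Prop :=
  ∃ u ∈ lifetime r p σ t j, procAt σ u i ∧ clAt r p α σ u i

/-- Edge of the borrow graph `G_B`. -/
def borrowEdge (r p : J → ℝ) (α : ℝ) (σ : ℝ → J → ℝ) (t : ℝ) (j i : J) : Prop :=
  ENedge r p α σ t j i ∨ ECedge r p α σ t j i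

/-- `reaches j i` iff `i ∈ R_j`, i.e. `i` is reachable from `j` in the borrow
    graph (`j` itself included). -/
def reaches (r p : J → ℝ) (α : ℝ) (σ : ℝ → J → ℝ) (t : ℝ) : J → J → Prop :=
  Relation.ReflTransGen (borrowEdge r p α σ t)

/-- Truncated progress `ȳ_j = min (y_j(t), α p_j)`. -/
def truncY (p : J → ℝ) (α : ℝ) (σ : ℝ → J → ℝ) (t : ℝ) (j : J) : ℝ :=
  min (workDone σ j t) (α * p j)

end

section helpers

variable {J : Type*} [Fintype J] {r p : J → ℝ} {α : ℝ} {σ : ℝ → J → ℝ}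

lemma sigma_le_one (hs : IsSchedule r p σ) (u : ℝ) (j : J) : σ u j ≤ 1 :=
  le_trans (Finset.single_le_sum (f := fun j' => σ u j')
    (fun j' _ => hs.nonneg u j') (Finset.mem_univ j)) (hs.sum_le_one u)

lemma sched_intInt (hs : IsSchedule r p σ) (j : J) (a b : ℝ) :
    IntervalIntegrable (fun v => σ v j) volume a b := by
  refine IntervalIntegrable.mono_fun' (g := fun _ => (1 : ℝ))
    intervalIntegrable_const ((hs.meas j).aestronglyMeasurable.restrict) ?_
  refine Filter.Eventually.of_forall fun x => ?_
  simp only [Real.norm_eq_abs, abs_of_nonneg (hs.nonneg x j)]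
  exact sigma_le_one hs x j

lemma workDone_zero (j : J) : workDone σ j 0 = 0 :=
  intervalIntegral.integral_same

lemma workDone_add (hs : IsSchedule r p σ) (j : J) (a b : ℝ) :
    workDone σ j b = workDone σ j a + ∫ v in a..b, σ v j := by
  unfold workDone
  rw [intervalIntegral.integral_add_adjacent_intervals (sched_intInt hs j 0 a)
    (sched_intInt hs j a b)]

lemma workDone_mono (hs : IsSchedule r p σ) (j : J) : Monotone (workDone σ j) := by
  intro a b hab
  rw [workDone_add hs j a b]
  have : 0 ≤ ∫ v in a..b, σ v j :=
    intervalIntegral.integral_nonneg hab fun u _ => hs.nonneg u j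
  linarith

lemma workDone_cont (hs : IsSchedule r p σ) (j : J) : Continuous (workDone σ j) :=
  intervalIntegral.continuous_primitive (sched_intInt hs j) 0

lemma workDone_nonneg (hs : IsSchedule r p σ) (j : J) {u : ℝ} (hu : 0 ≤ u) :
    0 ≤ workDone σ j u := by
  have := workDone_mono hs j hu
  rwa [workDone_zero] at this

lemma workDone_const (hs : IsSchedule r p σ) (j : J) {a b : ℝ} (hab : a ≤ b)
    (hz : ∀ u ∈ Set.Ioc a b, σ u j = 0) : workDone σ j b = workDone σ j a := by
  rw [workDone_add hs j a b, intervalIntegral.integral_of_le hab,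
    MeasureTheory.setIntegral_eq_zero_of_forall_eq_zero hz, add_zero]

lemma exists_proc_of_lt (hs : IsSchedule r p σ) (j : J) {a b : ℝ} (hab : a ≤ b)
    (h : workDone σ j a < workDone σ j b) : ∃ u ∈ Set.Ioc a b, 0 < σ u j := by
  by_contra h'
  push_neg at h'
  have hz : ∀ u ∈ Set.Ioc a b, σ u j = 0 := fun u hu =>
    le_antisymm (h' u hu) (hs.nonneg u j)
  rw [workDone_const hs j hab hz] at h
  exact lt_irrefl _ h

lemma lt_cTime_of_lt (hs : IsSchedule r p σ) {j : J} {u : ℝ}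
    (h : workDone σ j u < p j) : (u : EReal) < cTime p σ j := by
  have hub : ∀ v ∈ {v : ℝ | workDone σ j v = p j}, u < v := by
    intro v hv
    by_contra hle
    push_neg at hle
    have := workDone_mono hs j hle
    rw [hv] at this
    linarith
  rcases Set.eq_empty_or_nonempty {v : ℝ | workDone σ j v = p j} with hS | hS
  · rw [cTime, hS, Set.image_empty, sInf_empty]
    exact EReal.coe_lt_top u
  · have hbdd : BddBelow {v : ℝ | workDone σ j v = p j} :=
      ⟨u, fun v hv => (hub v hv).le⟩
    have hcl : IsClosed {v : ℝ | workDone σ j v = p j} :=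
      isClosed_eq (workDone_cont hs j) continuous_const
    have hm := hcl.csInf_mem hS hbdd
    obtain ⟨m, hmS, hmlb⟩ : ∃ m : ℝ, m ∈ {v : ℝ | workDone σ j v = p j} ∧
        ∀ v ∈ {v : ℝ | workDone σ j v = p j}, m ≤ v :=
      ⟨_, hm, fun v hv => csInf_le hbdd hv⟩
    have h1 : (u : EReal) < (m : EReal) := by exact_mod_cast hub _ hmS
    have h2 : (m : EReal) ≤ cTime p σ j := by
      refine le_sInf ?_
      rintro b ⟨v, hv, rfl⟩
      show (m : EReal) ≤ (v : EReal)
      exact_mod_cast hmlb v hv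
    exact lt_of_lt_of_le h1 h2

lemma workDone_lt_of_lt_cTime (hs : IsSchedule r p σ) {j : J} {u : ℝ}
    (h : (u : EReal) < cTime p σ j) : workDone σ j u < p j := by
  rcases lt_or_eq_of_le (hs.workDone_le u j) with h' | h'
  · exact h'
  · exfalso
    have : cTime p σ j ≤ (u : EReal) :=
      sInf_le ⟨u, h', rfl⟩
    exact absurd (lt_of_lt_of_le h this) (lt_irrefl _)

lemma workDone_eq_of_cTime_le (hs : IsSchedule r p σ) {j : J} {u : ℝ} (hp : 0 < p j)
    (h : cTime p σ j ≤ (u : EReal)) : workDone σ j u = p j := by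
  rcases Set.eq_empty_or_nonempty {v : ℝ | workDone σ j v = p j} with hS | hS
  · rw [cTime, hS, Set.image_empty, sInf_empty] at h
    exact absurd (lt_of_le_of_lt h (EReal.coe_lt_top u)) (lt_irrefl _)
  · have hbdd : BddBelow {v : ℝ | workDone σ j v = p j} := by
      refine ⟨0, fun v hv => ?_⟩
      by_contra hneg
      push_neg at hneg
      have := workDone_mono hs j hneg.le
      rw [workDone_zero, hv] at this
      linarith
    have hcl : IsClosed {v : ℝ | workDone σ j v = p j} :=
      isClosed_eq (workDone_cont hs j) continuous_const
    have hm := hcl.csInf_mem hS hbdd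
    obtain ⟨m, hmS, hmlb⟩ : ∃ m : ℝ, m ∈ {v : ℝ | workDone σ j v = p j} ∧
        ∀ v ∈ {v : ℝ | workDone σ j v = p j}, m ≤ v :=
      ⟨_, hm, fun v hv => csInf_le hbdd hv⟩
    have h2 : (m : EReal) ≤ cTime p σ j := by
      refine le_sInf ?_
      rintro b ⟨v, hv, rfl⟩
      show (m : EReal) ≤ (v : EReal)
      exact_mod_cast hmlb v hv
    have hle' : m ≤ u := by exact_mod_cast le_trans h2 h
    have := workDone_mono hs j hle'
    have hmp : workDone σ j m = p j := hmS
    rw [hmp] at this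
    exact le_antisymm (hs.workDone_le u j) this

end helpers

section key

variable {J : Type*} [Fintype J] {r p : J → ℝ} {α : ℝ} {σ : ℝ → J → ℝ}

lemma key_bound (hinst : IsInstance r p α) (halg : IsALG r p α σ) {t : ℝ} (ht : 0 ≤ t)
    {i j : J} (hi : r i ≤ t) (hjcl : clAt r p α σ t j)
    (hjt : sSup {u : ℝ | u ≤ t ∧ procAt σ u j} ≤ r i)
    {c : ℝ} (hc0 : 0 < c) (hcy : c ≤ workDone σ i t) (hca : c ≤ α * p i) :
    ((1 - α) / α) * c ≤ remT p σ j t := by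
  obtain ⟨hα0, hα1⟩ := hinst.alpha_mem
  have hs := halg.sched
  have hKpos : 0 < (1 - α) / α := div_pos (by linarith) hα0
  -- j was processed at some time ≤ t, hence `r j ≤ r i`
  have hyj_pos : 0 < workDone σ j t := lt_trans (by nlinarith [hinst.p_pos j]) hjcl.2
  obtain ⟨u₀, hu₀mem, hu₀pos⟩ : ∃ u ∈ Set.Ioc (0:ℝ) t, 0 < σ u j := by
    refine exists_proc_of_lt hs j ht ?_
    rwa [workDone_zero]
  have hrj : r j ≤ u₀ := by
    by_contra hcon
    push_neg at hcon
    exact absurd (hs.zero_before_release u₀ j hcon) (ne_of_gt hu₀pos)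
  have hSbdd : BddAbove {u : ℝ | u ≤ t ∧ procAt σ u j} := ⟨t, fun v hv => hv.1⟩
  have hrji : r j ≤ r i :=
    le_trans hrj (le_trans (le_csSup hSbdd ⟨hu₀mem.2, hu₀pos⟩) hjt)
  -- j is not processed on (r i, t], so its work is constant there
  have hconst : ∀ u, r i ≤ u → u ≤ t → workDone σ j u = workDone σ j t := by
    intro u hu1 hu2
    refine (workDone_const hs j hu2 ?_).symm
    intro w hw
    by_contra hcon
    have hwpos : 0 < σ w j := lt_of_le_of_ne (hs.nonneg w j) (Ne.symm hcon)
    have : w ≤ r i := le_trans (le_csSup hSbdd ⟨hw.2, hwpos⟩) hjt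
    linarith [hw.1]
  have hyjt_lt : workDone σ j t < p j := workDone_lt_of_lt_cTime hs hjcl.1.2
  -- clairvoyance of j at every u ∈ [r i, t]
  have hclj : ∀ u, r i ≤ u → u ≤ t → clAt r p α σ u j := by
    intro u hu1 hu2
    have hconst' := hconst u hu1 hu2
    refine ⟨⟨le_trans hrji hu1, lt_cTime_of_lt hs (by rw [hconst']; exact hyjt_lt)⟩, ?_⟩
    rw [hconst']
    exact hjcl.2
  -- ε-step
  have step : ∀ ε : ℝ, 0 < ε → ε < c → ((1 - α) / α) * (c - ε) ≤ remT p σ j t := by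
    intro ε hε0 hεc
    have hcont : ContinuousOn (workDone σ i) (Set.Icc 0 t) :=
      (workDone_cont hs i).continuousOn
    have hivt := intermediate_value_Icc ht hcont
    rw [workDone_zero] at hivt
    obtain ⟨u₂, hu₂mem, hu₂⟩ : ∃ u₂ ∈ Set.Icc (0:ℝ) t, workDone σ i u₂ = c :=
      hivt ⟨hc0.le, hcy⟩
    obtain ⟨u₁, hu₁mem, hu₁⟩ : ∃ u₁ ∈ Set.Icc (0:ℝ) t, workDone σ i u₁ = c - ε :=
      hivt ⟨by linarith, by linarith⟩
    have hu₁₂ : u₁ ≤ u₂ := by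
      by_contra hcon
      push_neg at hcon
      have := workDone_mono hs i hcon.le
      rw [hu₁, hu₂] at this
      linarith
    obtain ⟨u, humem, hupos⟩ : ∃ u ∈ Set.Ioc u₁ u₂, 0 < σ u i := by
      refine exists_proc_of_lt hs i hu₁₂ ?_
      rw [hu₁, hu₂]; linarith
    have hriu : r i ≤ u := by
      by_contra hcon
      push_neg at hcon
      exact absurd (hs.zero_before_release u i hcon) (ne_of_gt hupos)
    have hut : u ≤ t := le_trans humem.2 hu₂mem.2
    have hyu_le : workDone σ i u ≤ c := by
      have := workDone_mono hs i humem.2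
      rwa [hu₂] at this
    have hyu_ge : c - ε ≤ workDone σ i u := by
      have := workDone_mono hs i humem.1.le
      rwa [hu₁] at this
    have hpi := hinst.p_pos i
    have hnci : ncAt r p α σ u i := by
      refine ⟨⟨hriu, lt_cTime_of_lt hs ?_⟩, le_trans hyu_le hca⟩
      nlinarith
    have havail : ∃ k, availAt r p σ u k := ⟨i, hnci.1⟩
    by_cases hsrpt : SrptCond r p α σ u
    · exfalso
      obtain ⟨k, hk, hzero⟩ := halg.srpt_branch u havail hsrpt
      have hik : i = k := by
        by_contra hcon
        exact absurd (hzero i hcon) (ne_of_gt hupos)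
      have := hk.1.2
      rw [← hik] at this
      linarith [hnci.2]
    · obtain ⟨hmin, -⟩ := halg.setf_branch u havail hsrpt
      have hiMin := hmin i hupos
      have hclju := hclj u hriu hut
      have hnj : ¬ (clAt r p α σ u j ∧ ∀ j', ncAt r p α σ u j' →
          remT p σ j u ≤ ((1 - α) / α) * workDone σ j' u) :=
        fun hcontra => hsrpt ⟨j, hcontra⟩
      push_neg at hnj
      obtain ⟨j', hj'nc, hlt⟩ := hnj hclju
      have h1 : workDone σ i u ≤ workDone σ j' u := hiMin.2 j' hj'nc
      have h2 : remT p σ j u = remT p σ j t := by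
        unfold remT
        rw [hconst u hriu hut]
      have h3 : ((1 - α) / α) * (c - ε) ≤ ((1 - α) / α) * workDone σ j' u := by
        apply mul_le_mul_of_nonneg_left _ hKpos.le
        linarith
      linarith
  -- limit ε → 0
  by_contra hR
  push_neg at hR
  set R := remT p σ j t with hRdef
  set K := (1 - α) / α with hKdef
  have hδ : 0 < K * c - R := by linarith
  set ε := min (c / 2) ((K * c - R) / (2 * K)) with hεdef
  have hε0 : 0 < ε := lt_min (by linarith) (div_pos hδ (by linarith))
  have hεc : ε < c := lt_of_le_of_lt (min_le_left _ _) (by linarith)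
  have hstep := step ε hε0 hεc
  have hεK : K * ε ≤ (K * c - R) / 2 := by
    have h1 : ε ≤ (K * c - R) / (2 * K) := min_le_right _ _
    have h2 : K * ε ≤ K * ((K * c - R) / (2 * K)) := mul_le_mul_of_nonneg_left h1 hKpos.le
    have h3 : K * ((K * c - R) / (2 * K)) = (K * c - R) / 2 := by
      field_simp
    linarith
  have : K * (c - ε) = K * c - K * ε := by ring
  linarith

end key

/-- For a job `i` released by time `t` and any
`j ∈ H_i = {j ∈ Cl(t) ∖ {i} : t_j ≤ r i and i ∈ R_j}` (with `t_j` the latest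
time before or at `t` at which `j` is processed): (a) if `i ∈ N(t)` then
`(1-α)·y_i(t) ≤ p_j(t)`; (b) if `i ∉ N(t)` then `(1-α)·p_i ≤ p_j(t)`. -/



theorem stmt17 {J : Type*} [Fintype J] {r p : J → ℝ} {α : ℝ} {σ : ℝ → J → ℝ}
    (hinst : IsInstance r p α) (halg : IsALG r p α σ) (t : ℝ) (ht : 0 ≤ t)
    (i : J) (hi : r i ≤ t) (j : J) (hjcl : clAt r p α σ t j) (hji : j ≠ i)
    (hjt : sSup {u : ℝ | u ≤ t ∧ procAt σ u j} ≤ r i)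
    (hjR : reaches r p α σ t j i) :
    (ncAt r p α σ t i → (1 - α) * workDone σ i t ≤ remT p σ j t) ∧
      (¬ ncAt r p α σ t i → (1 - α) * p i ≤ remT p σ j t) := by
  obtain ⟨hα0, hα1⟩ := hinst.alpha_mem
  have hs := halg.sched
  have hpj := hinst.p_pos j
  have hpi := hinst.p_pos i
  have hrem : 0 ≤ remT p σ j t := by
    have := hs.workDone_le t j
    unfold remT
    linarith
  constructor
  · intro hnc
    rcases lt_or_eq_of_le (workDone_nonneg hs i ht) with hy | hy
    · have hb := key_bound hinst halg ht hi hjcl hjt hy le_rfl hnc.2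
      have hcmp : (1 - α) * workDone σ i t ≤ ((1 - α) / α) * workDone σ i t := by
        rw [div_mul_eq_mul_div, le_div_iff₀ hα0]
        nlinarith [mul_nonneg (by linarith : (0:ℝ) ≤ 1 - α) (le_of_lt hy)]
      linarith
    · rw [← hy, mul_zero]
      exact hrem
  · intro hnnc
    have hgt : α * p i < workDone σ i t := by
      by_cases hct : (t : EReal) < cTime p σ i
      · by_contra hcon
        push_neg at hcon
        exact hnnc ⟨⟨hi, hct⟩, hcon⟩
      · push_neg at hct
        rw [workDone_eq_of_cTime_le hs hpi hct]
        nlinarith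
    have hb := key_bound hinst halg ht hi hjcl hjt (mul_pos hα0 hpi) hgt.le le_rfl
    have heq : ((1 - α) / α) * (α * p i) = (1 - α) * p i := by
      field_simp
    linarith
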